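/- Let G be a cubic graph that admits a connected join J such that the complement E(G) \ J is the edge set of a single circuit of G, and such that the subgraph induced by J admits a proper 3-edge-colouring. Then every proper 3-edge-colouring of J is congruent. -/

import Mathlib

/-- The number of edges of `S` incident with `v`. -/
noncomputable def edgeDeg {V : Type*} (S : Set (Sym2 V)) (v : V) : ℕ :=
  {e ∈ S | v ∈ e}.ncard

/-- A join of a cubic graph `G`: a set of edges in which every vertex has degree 1 or 3. -/
def IsJoinOf {V : Type*} (G : SimpleGraph V) (J : Set (Sym2 V)) : Prop :=
  J ⊆ G.edgeSet ∧ ∀ v : V, edgeDeg J v = 1 ∨ edgeDeg J v = 3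

/-- `c` is a proper 3-edge-colouring of the edge set `J`. -/
def IsProperOn {V : Type*} (J : Set (Sym2 V)) (c : Sym2 V → Fin 3) : Prop :=
  ∀ e₁ ∈ J, ∀ e₂ ∈ J, e₁ ≠ e₂ → (∃ v : V, v ∈ e₁ ∧ v ∈ e₂) → c e₁ ≠ c e₂

/-- A pendant edge of `J`: an edge of `J` incident with a vertex of degree 1 in `J`. -/
def IsPendant {V : Type*} (J : Set (Sym2 V)) (e : Sym2 V) : Prop :=
  e ∈ J ∧ ∃ v ∈ e, edgeDeg J v = 1

/-- `T` is an edge-cut of `G`: an inclusionwise minimal set of edges whose removal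
increases the number of connected components. -/
def IsEdgeCut {V : Type*} [Fintype V] (G : SimpleGraph V) (T : Set (Sym2 V)) : Prop :=
  T ⊆ G.edgeSet ∧
  Nat.card G.ConnectedComponent < Nat.card (G.deleteEdges T).ConnectedComponent ∧
  ∀ T' : Set (Sym2 V), T' ⊂ T →
    ¬ (Nat.card G.ConnectedComponent < Nat.card (G.deleteEdges T').ConnectedComponent)

/-- A proper 3-edge-colouring `c` of a join `J` of `G` is congruent: for every set `S`
of pendant edges of `J` forming an edge-cut of `G` and every colour `i`,
`|S| ≡ |S ∩ c⁻¹(i)| (mod 2)`. -/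
def IsCongruent {V : Type*} [Fintype V] (G : SimpleGraph V) (J : Set (Sym2 V))
    (c : Sym2 V → Fin 3) : Prop :=
  ∀ S : Set (Sym2 V), (∀ e ∈ S, IsPendant J e) → IsEdgeCut G S →
    ∀ i : Fin 3, S.ncard % 2 = {e ∈ S | c e = i}.ncard % 2

open SimpleGraph

/-- If the two endpoints of `e` are reachable in `G.deleteEdges S`, then reachability in
`G.deleteEdges (S \ {e})` implies reachability in `G.deleteEdges S`. -/
lemma reach_of_del {V : Type*} {G : SimpleGraph V} {S : Set (Sym2 V)} {w u : V}
    (hr : (G.deleteEdges S).Reachable w u) {a b : V}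
    (hab : (G.deleteEdges (S \ {s(w, u)})).Reachable a b) :
    (G.deleteEdges S).Reachable a b := by
  obtain ⟨p⟩ := hab
  induction p with
  | nil => exact Reachable.refl _
  | @cons x y z hadj p ih =>
    refine Reachable.trans ?_ ih
    rw [SimpleGraph.deleteEdges_adj] at hadj
    by_cases hS : s(x, y) ∈ S
    · have hee : s(x, y) = s(w, u) := by
        by_contra hne
        exact hadj.2 ⟨hS, hne⟩
      rcases Sym2.eq_iff.mp hee with ⟨hx, hy⟩ | ⟨hx, hy⟩
      · subst hx; subst hy; exact hr
      · subst hx; subst hy; exact hr.symm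
    · exact SimpleGraph.Adj.reachable
        (by rw [SimpleGraph.deleteEdges_adj]; exact ⟨hadj.1, hS⟩)

lemma card_comp_le {V : Type*} [Fintype V] {G : SimpleGraph V} {S : Set (Sym2 V)} {w u : V}
    (hr : (G.deleteEdges S).Reachable w u) :
    Nat.card (G.deleteEdges S).ConnectedComponent ≤
      Nat.card (G.deleteEdges (S \ {s(w, u)})).ConnectedComponent := by
  have hle : G.deleteEdges S ≤ G.deleteEdges (S \ {s(w, u)}) :=
    SimpleGraph.deleteEdges_anti Set.diff_subset
  refine Nat.card_le_card_of_injective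
    (SimpleGraph.ConnectedComponent.map (SimpleGraph.Hom.ofLE hle)) ?_
  refine SimpleGraph.ConnectedComponent.ind₂ ?_
  intro a b hab
  rw [SimpleGraph.ConnectedComponent.map_mk, SimpleGraph.ConnectedComponent.map_mk,
    SimpleGraph.ConnectedComponent.eq] at hab
  exact SimpleGraph.ConnectedComponent.sound (reach_of_del hr hab)

/-- Let `G` be a cubic graph admitting a connected join `J` whose
complement `E(G) \ J` is the edge set of a single circuit of `G` (a connected 2-regular
subgraph), and suppose `J` admits a proper 3-edge-colouring. Then every proper
3-edge-colouring of `J` is congruent. -/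
theorem colouring_congruent_of_complement_circuit {V : Type*} [Fintype V] [DecidableEq V]
    (G : SimpleGraph V) [DecidableRel G.Adj]
    (hcubic : ∀ v : V, G.degree v = 3)
    (J : Set (Sym2 V)) (hJ : IsJoinOf G J)
    (hconn : (SimpleGraph.fromEdgeSet J).Connected)
    (C : G.Subgraph) (hCconn : C.Connected)
    (hCreg : ∀ v ∈ C.verts, (C.neighborSet v).ncard = 2)
    (hCcompl : C.edgeSet = G.edgeSet \ J)
    (hcolourable : ∃ c : Sym2 V → Fin 3, IsProperOn J c) :
    ∀ c : Sym2 V → Fin 3, IsProperOn J c → IsCongruent G J c := by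
  classical
  obtain ⟨hJsub, hJdeg⟩ := hJ
  intro c hc S hSpend hScut i
  obtain ⟨hSsub, hlt, hmin⟩ := hScut
  have hSJ : S ⊆ J := fun e he => (hSpend e he).1
  -- incidence sets have 3 elements
  have hinc : ∀ v : V, (G.incidenceSet v).ncard = 3 := by
    intro v
    have h1 : (G.incidenceSet v).ncard = (G.incidenceFinset v).card := by
      rw [Set.ncard_eq_toFinset_card']
      rfl
    rw [h1, SimpleGraph.card_incidenceFinset_eq_degree, hcubic]
  -- a vertex of `J`-degree 1 lies on the circuit
  have hdeg1C : ∀ v : V, edgeDeg J v = 1 → v ∈ C.verts := by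
    intro v hv
    have hsub : {e ∈ J | v ∈ e} ⊆ G.incidenceSet v := fun e he => ⟨hJsub he.1, he.2⟩
    have hne : {e ∈ J | v ∈ e} ≠ G.incidenceSet v := by
      intro h
      rw [edgeDeg, h, hinc] at hv
      omega
    obtain ⟨e, heI, heJv⟩ := Set.exists_of_ssubset ⟨hsub, fun h => hne (hsub.antisymm h)⟩
    have heC : e ∈ C.edgeSet := by
      rw [hCcompl]
      exact ⟨heI.1, fun hJe => heJv ⟨hJe, heI.2⟩⟩
    obtain ⟨z, rfl⟩ := Sym2.mem_iff_exists.mp heI.2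
    exact C.edge_vert (SimpleGraph.Subgraph.mem_edgeSet.mp heC)
  -- S is nonempty; pick a base vertex on the circuit
  have hSne : S.Nonempty := by
    rcases Set.eq_empty_or_nonempty S with rfl | h
    · rw [SimpleGraph.deleteEdges_empty] at hlt
      exact absurd hlt (lt_irrefl _)
    · exact h
  obtain ⟨e₀, he₀⟩ := hSne
  obtain ⟨v₀, hv₀e, hv₀⟩ := (hSpend e₀ he₀).2
  have hv₀C : v₀ ∈ C.verts := hdeg1C v₀ hv₀
  set H := G.deleteEdges S with hH
  -- circuit vertices are reachable from v₀ in G - S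
  have hCX : ∀ w ∈ C.verts, H.Reachable v₀ w := by
    intro w hw
    let f : C.coe →g H :=
      { toFun := Subtype.val
        map_rel' := by
          rintro ⟨a, ha⟩ ⟨b, hb⟩ hab
          rw [SimpleGraph.deleteEdges_adj]
          have hab' : C.Adj a b := hab
          refine ⟨C.adj_sub hab', fun hS => ?_⟩
          have hmem : s(a, b) ∈ C.edgeSet := SimpleGraph.Subgraph.mem_edgeSet.mpr hab'
          rw [hCcompl] at hmem
          exact hmem.2 (hSJ hS) }
    exact (hCconn.coe.preconnected ⟨v₀, hv₀C⟩ ⟨w, hw⟩).map f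
  set Y : Set V := {v | ¬ H.Reachable v₀ v} with hYdef
  -- every edge of S has exactly one end in Y
  have hSstruct : ∀ e ∈ S, ∃ v z, e = s(v, z) ∧ v ∉ Y ∧ z ∈ Y := by
    intro e he
    obtain ⟨heJ, v, hve, hv1⟩ := hSpend e he
    obtain ⟨z, rfl⟩ := Sym2.mem_iff_exists.mp hve
    have hvX : H.Reachable v₀ v := hCX v (hdeg1C v hv1)
    refine ⟨v, z, rfl, fun hvY => hvY hvX, ?_⟩
    intro hzX
    have hr : H.Reachable v z := hvX.symm.trans hzX
    have hss : S \ {s(v, z)} ⊂ S := Set.sdiff_singleton_ssubset.mpr he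
    exact hmin _ hss (lt_of_lt_of_le hlt (card_comp_le hr))
  -- Y is closed under non-S edges of G
  have hYclosed : ∀ u ∈ Y, ∀ z : V, G.Adj u z → s(u, z) ∉ S → z ∈ Y := by
    intro u hu z hadj hS hzX
    refine hu (hzX.trans (SimpleGraph.Adj.reachable ?_))
    rw [SimpleGraph.deleteEdges_adj]
    exact ⟨hadj.symm, by rwa [Sym2.eq_swap]⟩
  -- all edges at a vertex of Y belong to J
  have hYdeg : ∀ u ∈ Y, {e ∈ J | u ∈ e} = G.incidenceSet u := by
    intro u hu
    have h3 : edgeDeg J u = 3 := by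
      rcases hJdeg u with h1 | h3
      · exact absurd (hCX u (hdeg1C u h1)) hu
      · exact h3
    refine Set.eq_of_subset_of_ncard_le (fun e he => ⟨hJsub he.1, he.2⟩) ?_
    rw [hinc u]
    rw [edgeDeg] at h3
    omega
  -- each colour appears exactly once at each vertex of Y
  have hfiber : ∀ u ∈ Y, ∀ j : Fin 3,
      ((G.incidenceFinset u).filter (fun e => c e = j)).card = 1 := by
    intro u hu j
    have hcard3 : (G.incidenceFinset u).card = 3 := by
      rw [SimpleGraph.card_incidenceFinset_eq_degree, hcubic]
    have hJall : ∀ e ∈ G.incidenceFinset u, e ∈ J ∧ u ∈ e := by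
      intro e he
      rw [SimpleGraph.mem_incidenceFinset] at he
      have := (hYdeg u hu).symm ▸ (he : e ∈ G.incidenceSet u)
      exact this
    have hinj : ∀ e₁ ∈ G.incidenceFinset u, ∀ e₂ ∈ G.incidenceFinset u,
        c e₁ = c e₂ → e₁ = e₂ := by
      intro e₁ h₁ e₂ h₂ hce
      by_contra hne
      exact hc e₁ (hJall e₁ h₁).1 e₂ (hJall e₂ h₂).1 hne
        ⟨u, (hJall e₁ h₁).2, (hJall e₂ h₂).2⟩ hce
    have hle1 : ((G.incidenceFinset u).filter (fun e => c e = j)).card ≤ 1 := by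
      refine Finset.card_le_one.mpr ?_
      intro a ha b hb
      rw [Finset.mem_filter] at ha hb
      exact hinj a ha.1 b hb.1 (ha.2.trans hb.2.symm)
    have himg : (G.incidenceFinset u).image c = Finset.univ := by
      apply Finset.eq_univ_of_card
      rw [Finset.card_image_of_injOn (fun a ha b hb h => hinj a ha b hb h), hcard3]
      simp
    have hjm : j ∈ (G.incidenceFinset u).image c := by rw [himg]; exact Finset.mem_univ j
    obtain ⟨e, he, hce⟩ := Finset.mem_image.mp hjm
    have hpos : 0 < ((G.incidenceFinset u).filter (fun e => c e = j)).card :=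
      Finset.card_pos.mpr ⟨e, Finset.mem_filter.mpr ⟨he, hce⟩⟩
    omega
  set Yf : Finset V := Finset.univ.filter (fun v => v ∈ Y) with hYf
  -- the key parity identity for each colour
  have key : ∀ j : Fin 3,
      (Finset.univ.filter (fun e => e ∈ S ∧ c e = j)).card % 2 = Yf.card % 2 := by
    intro j
    set Af : Finset (Sym2 V) :=
      G.edgeFinset.filter (fun e => c e = j ∧ ∃ v ∈ Yf, v ∈ e) with hAf
    have hrow : ∀ u ∈ Yf, (Af.filter (fun e => u ∈ e)).card = 1 := by
      intro u hu
      have huY : u ∈ Y := (Finset.mem_filter.mp hu).2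
      have heq : Af.filter (fun e => u ∈ e)
          = (G.incidenceFinset u).filter (fun e => c e = j) := by
        ext e
        rw [SimpleGraph.incidenceFinset_eq_filter]
        simp only [hAf, Finset.mem_filter]
        constructor
        · rintro ⟨⟨he, hcj, -⟩, hue⟩
          exact ⟨⟨he, hue⟩, hcj⟩
        · rintro ⟨⟨he, hue⟩, hcj⟩
          exact ⟨⟨he, hcj, u, hu, hue⟩, hue⟩
      rw [heq]
      exact hfiber u huY j
    have hcol : ∀ e ∈ Af, (Yf.filter (fun v => v ∈ e)).card = if e ∈ S then 1 else 2 := by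
      intro e heA
      rw [hAf, Finset.mem_filter] at heA
      obtain ⟨heE, hcj, w, hwYf, hwe⟩ := heA
      have hwY : w ∈ Y := (Finset.mem_filter.mp hwYf).2
      by_cases heS : e ∈ S
      · obtain ⟨v, z, rfl, hvX, hzY⟩ := hSstruct e heS
        rw [if_pos heS, Finset.card_eq_one]
        refine ⟨z, ?_⟩
        ext x
        simp only [hYf, Finset.mem_filter, Finset.mem_univ, true_and, Finset.mem_singleton,
          Sym2.mem_iff]
        constructor
        · rintro ⟨hxY, hx | hx⟩
          · exact absurd (hx ▸ hxY) hvX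
          · exact hx
        · rintro rfl
          exact ⟨hzY, Or.inr rfl⟩
      · rw [if_neg heS]
        obtain ⟨z, rfl⟩ := Sym2.mem_iff_exists.mp hwe
        have hadj : G.Adj w z := (SimpleGraph.mem_edgeSet G).mp (SimpleGraph.mem_edgeFinset.mp heE)
        have hwz : w ≠ z := hadj.ne
        have hzY : z ∈ Y := hYclosed w hwY z hadj heS
        have heq2 : Yf.filter (fun v => v ∈ s(w, z)) = {w, z} := by
          ext x
          simp only [hYf, Finset.mem_filter, Finset.mem_univ, true_and, Sym2.mem_iff,
            Finset.mem_insert, Finset.mem_singleton]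
          constructor
          · rintro ⟨-, h⟩
            exact h
          · rintro (rfl | rfl)
            · exact ⟨hwY, Or.inl rfl⟩
            · exact ⟨hzY, Or.inr rfl⟩
        rw [heq2, Finset.card_pair hwz]
    have hdc : ∑ u ∈ Yf, (Af.filter (fun e => u ∈ e)).card
        = ∑ e ∈ Af, (Yf.filter (fun v => v ∈ e)).card := by
      simp_rw [Finset.card_filter]
      exact Finset.sum_comm
    have hleft : ∑ u ∈ Yf, (Af.filter (fun e => u ∈ e)).card = Yf.card := by
      rw [Finset.sum_congr rfl hrow]
      simp
    have hright : ∑ e ∈ Af, (Yf.filter (fun v => v ∈ e)).card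
        = (Af.filter (fun e => e ∈ S)).card * 1
          + (Af.filter (fun e => ¬ e ∈ S)).card * 2 := by
      rw [Finset.sum_congr rfl hcol, Finset.sum_ite, Finset.sum_const, Finset.sum_const,
        smul_eq_mul, smul_eq_mul]
    have hAfS : Af.filter (fun e => e ∈ S)
        = Finset.univ.filter (fun e => e ∈ S ∧ c e = j) := by
      ext e
      simp only [hAf, Finset.mem_filter, Finset.mem_univ, true_and]
      constructor
      · rintro ⟨⟨-, hcj, -⟩, heS⟩
        exact ⟨heS, hcj⟩
      · rintro ⟨heS, hcj⟩
        obtain ⟨v, z, hez, hvX, hzY⟩ := hSstruct e heS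
        refine ⟨⟨SimpleGraph.mem_edgeFinset.mpr (hSsub heS), hcj, z, ?_, ?_⟩, heS⟩
        · simp only [hYf, Finset.mem_filter, Finset.mem_univ, true_and]
          exact hzY
        · rw [hez]
          exact Sym2.mem_mk_right v z
    have hfinal : Yf.card = (Finset.univ.filter (fun e => e ∈ S ∧ c e = j)).card * 1
        + (Af.filter (fun e => ¬ e ∈ S)).card * 2 := by
      rw [← hAfS, ← hright, ← hdc, hleft]
    omega
  -- translate ncard to Finset cards
  have hfin : ∀ (T : Set (Sym2 V)), T.ncard = (Finset.univ.filter (fun e => e ∈ T)).card := by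
    intro T
    rw [Set.ncard_eq_toFinset_card']
    congr 1
    ext e
    simp [Set.mem_toFinset]
  have hsplit : (Finset.univ.filter (fun e => e ∈ S)).card
      = ∑ j : Fin 3, (Finset.univ.filter (fun e => e ∈ S ∧ c e = j)).card := by
    rw [Finset.card_eq_sum_card_fiberwise (f := c) (t := Finset.univ)
      (fun e _ => Finset.mem_univ (c e))]
    exact Finset.sum_congr rfl fun j _ => by rw [Finset.filter_filter]
  have hfin2 : {e ∈ S | c e = i}.ncard
      = (Finset.univ.filter (fun e => e ∈ S ∧ c e = i)).card := by
    rw [Set.ncard_eq_toFinset_card']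
    congr 1
    ext e
    simp [Set.mem_toFinset]
  rw [hfin S, hfin2]
  have h0 := key 0
  have h1 := key 1
  have h2 := key 2
  have hi := key i
  rw [Fin.sum_univ_three] at hsplit
  omega
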